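/- For 0 < α < 1 and λ > 0, the function Q(t) = E_α(-λ t^α) solves the fractional relaxation equation: for all t > 0, (1/Γ(1-α)) ∫_0^t (t-t')^{-α} Q'(t') dt' = -λ Q(t), with Q(0) = 1, where Q' denotes the derivative of Q (given by termwise differentiation of the Mittag-Leffler series). -/

import Mathlib

open Real Set MeasureTheory intervalIntegral Filter

lemma realBeta (a b : ℝ) (ha : 0 < a) (hb : 0 < b) :
    ∫ x in (0:ℝ)..1, x ^ (a-1) * (1-x) ^ (b-1)
      = Real.Gamma a * Real.Gamma b / Real.Gamma (a+b) := by
  have key := Complex.Gamma_mul_Gamma_eq_betaIntegral (s := a) (t := b)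
    (by simpa using ha) (by simpa using hb)
  have hbeta : Complex.betaIntegral a b
      = ((∫ x in (0:ℝ)..1, x ^ (a-1) * (1-x) ^ (b-1) : ℝ) : ℂ) := by
    rw [Complex.betaIntegral, ← intervalIntegral.integral_ofReal]
    refine intervalIntegral.integral_congr fun x hx => ?_
    rw [uIcc_of_le (by norm_num : (0:ℝ) ≤ 1)] at hx
    push_cast
    rw [Complex.ofReal_cpow hx.1, Complex.ofReal_cpow (by linarith [hx.2]), ]
    push_cast
    ring
  rw [hbeta] at key
  have hG : Real.Gamma (a+b) ≠ 0 := (Real.Gamma_pos_of_pos (by linarith)).ne'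
  have : ((Real.Gamma a * Real.Gamma b : ℝ) : ℂ)
      = ((Real.Gamma (a+b) * ∫ x in (0:ℝ)..1, x ^ (a-1) * (1-x) ^ (b-1) : ℝ) : ℂ) := by
    rw [show ((a:ℂ)+(b:ℂ)) = ((a+b:ℝ):ℂ) by push_cast; ring,
      Complex.Gamma_ofReal, Complex.Gamma_ofReal, Complex.Gamma_ofReal] at key
    push_cast
    rw [key]
  have := Complex.ofReal_injective this
  field_simp
  linarith [this]

lemma Gamma_lb (α x : ℝ) (hα0 : 0 < α) (hα1 : α < 1) (hx : 0 < x) :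
    x * Real.Gamma x ≤ Real.Gamma (x + α) * (x + α) ^ (1 - α) := by
  have hxα : 0 < x + α := by linarith
  have h1 : Real.Gamma (x + 1) = x * Real.Gamma x := Real.Gamma_add_one hx.ne'
  have h2 : Real.Gamma (x + α + 1) = (x + α) * Real.Gamma (x + α) :=
    Real.Gamma_add_one hxα.ne'
  have hc := Real.convexOn_log_Gamma.2 (mem_Ioi.2 hxα) (mem_Ioi.2 (by linarith : (0:ℝ) < x + α + 1))
      hα0.le (by linarith : (0:ℝ) ≤ 1 - α) (by ring)
  have hcomb : α • (x + α) + (1 - α) • (x + α + 1) = x + 1 := by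
    simp only [smul_eq_mul]; ring
  rw [hcomb] at hc
  simp only [Function.comp_apply, smul_eq_mul] at hc
  have hGpos : 0 < Real.Gamma (x + α) := Real.Gamma_pos_of_pos hxα
  have hGpos1 : 0 < Real.Gamma (x + 1) := Real.Gamma_pos_of_pos (by linarith)
  calc x * Real.Gamma x = Real.Gamma (x + 1) := h1.symm
    _ = Real.exp (Real.log (Real.Gamma (x + 1))) := (Real.exp_log hGpos1).symm
    _ ≤ Real.exp (α * Real.log (Real.Gamma (x + α)) + (1 - α) * Real.log (Real.Gamma (x + α + 1))) :=
        Real.exp_le_exp.2 hc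
    _ = Real.Gamma (x + α) * (x + α) ^ (1 - α) := by
        rw [h2, Real.log_mul hxα.ne' hGpos.ne']
        rw [Real.rpow_def_of_pos hxα, ← Real.exp_log hGpos]
        rw [← Real.exp_add]
        congr 1
        rw [Real.log_exp]
        ring

lemma summable_master (α r : ℝ) (hα0 : 0 < α) (hα1 : α < 1) (hr : 0 ≤ r) :
    Summable (fun n : ℕ => ((n:ℝ)+1) * r ^ n / Real.Gamma (α * n + 1)) := by
  apply summable_of_ratio_norm_eventually_le (r := 1/2) (by norm_num)
  -- choose N with (α * N + 1)^α ≥ 8 r  and then prove the ratio bound for n ≥ N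
  obtain ⟨N, hN⟩ : ∃ N : ℕ, (8*r) ^ (1/α) ≤ α * N := by
    obtain ⟨N, hN⟩ := exists_nat_ge ((8*r) ^ (1/α) / α)
    exact ⟨N, by rw [div_le_iff₀ hα0] at hN; linarith [hN]⟩
  rw [eventually_atTop]
  refine ⟨N, fun n hn => ?_⟩
  have hxpos : 0 < α * n + 1 := by positivity
  have hG1 : 0 < Real.Gamma (α * n + 1) := Real.Gamma_pos_of_pos hxpos
  have hG2 : 0 < Real.Gamma (α * (n+1) + 1) := Real.Gamma_pos_of_pos (by positivity)
  have hcast : α * ((n:ℝ)+1) + 1 = (α * n + 1) + α := by ring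
  -- key: (α n + 1 + α)^α ≥ 8 r
  have h8r : 8 * r ≤ ((α * n + 1) + α) ^ α := by
    rcases le_or_gt (8*r) 1 with h | h
    · calc 8*r ≤ 1 := h
        _ = (1:ℝ) ^ α := (Real.one_rpow α).symm
        _ ≤ ((α * n + 1) + α) ^ α := by
            apply Real.rpow_le_rpow (by norm_num)
              (by nlinarith [mul_nonneg hα0.le (Nat.cast_nonneg n)]) hα0.le
    · have h1 : (1:ℝ) ≤ 8*r := h.le.trans ?foo
      case foo => exact le_refl _
      have : (8*r) ^ (1/α) ≤ (α * n + 1) + α := by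
        calc (8*r) ^ (1/α) ≤ α * N := hN
          _ ≤ α * n := by
              have : (N:ℝ) ≤ n := Nat.cast_le.2 hn
              nlinarith
          _ ≤ (α * n + 1) + α := by linarith
      calc 8*r = ((8*r) ^ (1/α)) ^ α := by
            rw [← Real.rpow_mul (by linarith : (0:ℝ) ≤ 8*r), one_div,
              inv_mul_cancel₀ hα0.ne', Real.rpow_one]
        _ ≤ ((α * n + 1) + α) ^ α := Real.rpow_le_rpow (by positivity) this hα0.le
  -- now the key Gamma inequality
  have hkey := Gamma_lb α (α * n + 1) hα0 hα1 hxpos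
  -- ‖a (n+1)‖ ≤ 1/2 ‖a n‖
  have han : (0:ℝ) ≤ ((n:ℝ)+1) * r ^ n / Real.Gamma (α * n + 1) := by positivity
  rw [Real.norm_of_nonneg (by positivity), Real.norm_of_nonneg han]
  rw [div_le_iff₀ (by push_cast; exact Real.Gamma_pos_of_pos (by nlinarith [mul_nonneg hα0.le (Nat.cast_nonneg n)]))]
  push_cast
  rw [hcast]
  have hP : (0:ℝ) < ((α * n + 1) + α) ^ (1 - α) := Real.rpow_pos_of_pos (by linarith) _
  -- from hkey : (αn+1) Γ(αn+1) ≤ Γ(αn+1+α) * P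
  -- suffices: (n+2) r^{n+1} * P * (αn+1) Γ(αn+1) ≤ 1/2 (n+1) r^n /Γ(αn+1) * Γ(αn+1+α) * P * (αn+1)??
  -- do arithmetic: goal : (n+1+1) * r^(n+1) ≤ 1/2 * ((n+1) * r^n / Γ1) * Γ2
  have hstep : ((n:ℝ)+1+1) * r ^ (n+1) * ((α * n + 1) + α) ^ (1-α)
      ≤ 1/2 * (((n:ℝ)+1) * r ^ n) * (α * n + 1) := by
    have hPval : ((α * n + 1) + α) ^ (1-α) * ((α * n + 1) + α) ^ α = (α * n + 1) + α := by
      rw [← Real.rpow_add (by linarith)]; norm_num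
    -- multiply target by ((αn+1)+α)^α > 0
    have hPα : (0:ℝ) < ((α * n + 1) + α) ^ α := Real.rpow_pos_of_pos (by linarith) _
    rw [← mul_le_mul_iff_of_pos_right hPα]
    have lhs_eq : ((n:ℝ)+1+1) * r ^ (n+1) * ((α * n + 1) + α) ^ (1-α) * ((α * n + 1) + α) ^ α
        = ((n:ℝ)+1+1) * r ^ (n+1) * ((α * n + 1) + α) := by
      rw [mul_assoc, hPval]
    rw [lhs_eq, pow_succ]
    -- (n+2) * r^n * r * (αn+1+α) ≤ 1/2 (n+1) r^n (αn+1) * (αn+1+α)^α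
    -- use 8r ≤ (αn+1+α)^α, n+2 ≤ 2(n+1), αn+1+α ≤ 2(αn+1)
    have h2 : (α * n + 1) + α ≤ 2 * (α * n + 1) := by
      have : 0 ≤ α * n := by positivity
      linarith
    nlinarith [mul_nonneg (mul_nonneg (by positivity : (0:ℝ) ≤ 1/2*((n:ℝ)+1)*r^n)
        (by linarith : (0:ℝ) ≤ α*n+1)) (by linarith : (0:ℝ) ≤ ((α*n+1)+α)^α - 8*r),
      mul_nonneg (by positivity : (0:ℝ) ≤ ((n:ℝ)+1+1)*(r^n*r))
        (by linarith : (0:ℝ) ≤ 2*(α*n+1) - ((α*n+1)+α)),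
      mul_nonneg (mul_nonneg (mul_nonneg (by exact_mod_cast Nat.cast_nonneg n : (0:ℝ) ≤ (n:ℝ))
        (pow_nonneg hr n)) hr) (by linarith : (0:ℝ) ≤ α*n+1)]
  calc ((n:ℝ)+1+1) * r ^ (n+1)
      = (((n:ℝ)+1+1) * r ^ (n+1) * ((α*n+1)+α) ^ (1-α)) / ((α*n+1)+α) ^ (1-α) := by
        field_simp
    _ ≤ (1/2 * (((n:ℝ)+1) * r ^ n) * (α * n + 1)) / ((α*n+1)+α) ^ (1-α) := by
        gcongr
    _ ≤ 1/2 * (((n:ℝ)+1) * r ^ n / Real.Gamma (α*n+1)) * Real.Gamma ((α*n+1)+α) := by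
        rw [div_le_iff₀ hP]
        have := hkey
        -- (1/2 (n+1) r^n (αn+1)) ≤ 1/2 (n+1)r^n/Γ1 * Γ2 * P
        have hA : (0:ℝ) ≤ 1/2 * (((n:ℝ)+1) * r ^ n) / Real.Gamma (α*n+1) := by positivity
        calc 1/2 * (((n:ℝ)+1) * r ^ n) * (α * n + 1)
            = (1/2 * (((n:ℝ)+1) * r ^ n) / Real.Gamma (α*n+1)) * ((α*n+1) * Real.Gamma (α*n+1)) := by
              field_simp
          _ ≤ (1/2 * (((n:ℝ)+1) * r ^ n) / Real.Gamma (α*n+1)) * (Real.Gamma ((α*n+1)+α) * ((α*n+1)+α) ^ (1-α)) := by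
              exact mul_le_mul_of_nonneg_left hkey hA
          _ = 1/2 * (((n:ℝ)+1) * r ^ n / Real.Gamma (α*n+1)) * Real.Gamma ((α*n+1)+α) * ((α*n+1)+α) ^ (1-α) := by
              ring

lemma betaTypeIntegrable (p q t : ℝ) (hp : -1 < p) (hq : -1 < q) (ht : 0 < t) :
    IntervalIntegrable (fun x => x ^ p * (t - x) ^ q) volume 0 t := by
  have h1 : IntervalIntegrable (fun x => x ^ p * (t - x) ^ q) volume 0 (t/2) := by
    apply (intervalIntegral.intervalIntegrable_rpow' hp).mul_continuousOn
    apply ContinuousOn.rpow_const (continuousOn_const.sub continuousOn_id)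
    intro x hx
    rw [uIcc_of_le (by linarith : (0:ℝ) ≤ t/2)] at hx
    exact Or.inl (by show t - x ≠ 0; intro h; nlinarith [hx.2])
  have h2 : IntervalIntegrable (fun x => x ^ p * (t - x) ^ q) volume (t/2) t := by
    have base : IntervalIntegrable (fun x : ℝ => x ^ q) volume 0 (t/2) :=
      intervalIntegral.intervalIntegrable_rpow' hq
    have comp := base.comp_sub_left t
    have : t - t/2 = t/2 := by ring
    rw [this, sub_zero] at comp
    apply comp.symm.continuousOn_mul
    apply ContinuousOn.rpow_const continuousOn_id
    intro x hx
    rw [uIcc_of_le (by linarith : t/2 ≤ t)] at hx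
    exact Or.inl (by simp only [id]; intro h; nlinarith [hx.1])
  exact h1.trans h2



lemma betaTypeValue (p q t : ℝ) (hp : 0 < p) (hq : 0 < q) (ht : 0 < t) :
    ∫ x in (0:ℝ)..t, x ^ (p-1) * (t - x) ^ (q-1)
      = t ^ (p+q-1) * (Real.Gamma p * Real.Gamma q / Real.Gamma (p+q)) := by
  have key := intervalIntegral.mul_integral_comp_mul_left
    (a := (0:ℝ)) (b := 1) (c := t) (f := fun x => x ^ (p-1) * (t - x) ^ (q-1))
  rw [mul_zero, mul_one] at key
  rw [← key]
  have hcong : ∫ u in (0:ℝ)..1, (t*u) ^ (p-1) * (t - t*u) ^ (q-1)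
      = ∫ u in (0:ℝ)..1, (t^(p-1) * t^(q-1)) * (u ^ (p-1) * (1-u) ^ (q-1)) := by
    refine intervalIntegral.integral_congr fun u hu => ?_
    rw [uIcc_of_le (by norm_num : (0:ℝ) ≤ 1)] at hu
    have h1 : t - t*u = t*(1-u) := by ring
    rw [h1, Real.mul_rpow ht.le hu.1, Real.mul_rpow ht.le (by linarith [hu.2])]
    ring
  rw [hcong, intervalIntegral.integral_const_mul, realBeta p q hp hq]
  rw [show p+q-1 = (p-1)+(q-1)+1 by ring, Real.rpow_add ht, Real.rpow_add ht, Real.rpow_one]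
  ring

lemma QderivAux (α lam : ℝ) (hα0 : 0 < α) (hα1 : α < 1) (hlam : 0 < lam)
    (Q : ℝ → ℝ)
    (hQ : ∀ t, Q t = ∑' n : ℕ, (-lam * t ^ α) ^ n / Real.Gamma (α * n + 1))
    (y : ℝ) (hy : 0 < y) :
    HasDerivAt Q (∑' n : ℕ, (-lam) ^ n * (α * n * y ^ (α * n - 1)) / Real.Gamma (α * n + 1)) y := by
  have hQfun : Q = fun z => ∑' n : ℕ, (-lam * z ^ α) ^ n / Real.Gamma (α * n + 1) :=
    funext hQ
  rw [hQfun]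
  set g : ℕ → ℝ → ℝ := fun n z => (-lam * z ^ α) ^ n / Real.Gamma (α * n + 1) with hg_def
  set g' : ℕ → ℝ → ℝ :=
    fun n z => (-lam) ^ n * (α * n * z ^ (α * n - 1)) / Real.Gamma (α * n + 1) with hg'_def
  set u : ℕ → ℝ :=
    fun n => (2*α/y) * (((n:ℝ)+1) * (lam * (y+1)^α) ^ n / Real.Gamma (α * n + 1)) with hu_def
  have hGpos : ∀ n : ℕ, 0 < Real.Gamma (α * n + 1) :=
    fun n => Real.Gamma_pos_of_pos (by positivity)
  have hu : Summable u :=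
    (summable_master α (lam * (y+1)^α) hα0 hα1 (by positivity)).mul_left _
  have hopen : IsOpen (Ioo (y/2) (y+1)) := isOpen_Ioo
  have hconn : IsPreconnected (Ioo (y/2) (y+1)) := (convex_Ioo _ _).isPreconnected
  have hyin : y ∈ Ioo (y/2) (y+1) := ⟨by linarith, by linarith⟩
  have hderiv : ∀ n z, z ∈ Ioo (y/2) (y+1) → HasDerivAt (g n) (g' n z) z := by
    intro n z hz
    have hz0 : 0 < z := lt_trans (by linarith) hz.1
    have hbase : HasDerivAt (fun w : ℝ => (-lam) ^ n * w ^ (α * n) / Real.Gamma (α * n + 1))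
        (g' n z) z := by
      have h1 : HasDerivAt (fun w : ℝ => w ^ (α * n)) (α * n * z ^ (α * n - 1)) z :=
        Real.hasDerivAt_rpow_const (Or.inl hz0.ne')
      exact (h1.const_mul ((-lam) ^ n)).div_const _
    apply hbase.congr_of_eventuallyEq
    filter_upwards [isOpen_Ioi.mem_nhds (mem_Ioi.2 hz0)] with w hw
    have hw0 : (0:ℝ) < w := hw
    rw [hg_def]
    simp only
    rw [mul_pow, ← Real.rpow_natCast (w ^ α) n, ← Real.rpow_mul hw0.le]
  have hbound : ∀ n z, z ∈ Ioo (y/2) (y+1) → ‖g' n z‖ ≤ u n := by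
    intro n z hz
    have hz0 : 0 < z := lt_trans (by linarith) hz.1
    have h1 : ‖g' n z‖ = lam ^ n * (α * n * z ^ (α * n - 1)) / Real.Gamma (α * n + 1) := by
      rw [hg'_def]
      simp only
      rw [Real.norm_eq_abs, abs_div, abs_of_pos (hGpos n), abs_mul, abs_pow, abs_neg,
        abs_of_pos hlam, abs_of_nonneg (by positivity)]
    rw [h1, hu_def]
    simp only
    rw [mul_pow]
    have hz1 : z ^ (α * n - 1) ≤ (y+1) ^ (α * n) * (2/y) := by
      have e1 : z ^ (α * n - 1) = z ^ (α * n) / z := by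
        rw [Real.rpow_sub hz0, Real.rpow_one]
      rw [e1]
      have e2 : (y+1) ^ (α*n) * (2/y) = (y+1)^(α*n) / (y/2) := by
        field_simp
      rw [e2]
      apply div_le_div₀ (by positivity) (Real.rpow_le_rpow hz0.le (le_of_lt hz.2) (by positivity))
        (by linarith) (le_of_lt hz.1)
    have hyn : (y+1) ^ (α * (n:ℝ)) = ((y+1)^α) ^ n := by
      rw [Real.rpow_mul (by linarith), Real.rpow_natCast]
    have expand : 2*α/y * (((n:ℝ)+1) * (lam ^ n * ((y+1)^α) ^ n) / Real.Gamma (α*n+1))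
        = (2*α/y * (((n:ℝ)+1) * (lam ^ n * ((y+1)^α) ^ n))) / Real.Gamma (α*n+1) := by
      ring
    rw [expand, div_le_div_iff_of_pos_right (hGpos n)]
    have h3 : α * n * z ^ (α * n - 1) ≤ α * n * ((y+1) ^ (α*n) * (2/y)) :=
      mul_le_mul_of_nonneg_left hz1 (by positivity)
    calc lam ^ n * (α * n * z ^ (α * n - 1))
        ≤ lam ^ n * (α * n * ((y+1) ^ (α*n) * (2/y))) :=
          mul_le_mul_of_nonneg_left h3 (by positivity)
      _ = 2*α/y * (((n:ℝ)) * (lam ^ n * ((y+1)^α) ^ n)) := by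
          rw [← hyn]; field_simp
      _ ≤ 2*α/y * (((n:ℝ)+1) * (lam ^ n * ((y+1)^α) ^ n)) := by
          apply mul_le_mul_of_nonneg_left _ (by positivity)
          apply mul_le_mul_of_nonneg_right (by linarith) (by positivity)
  have hg0 : Summable fun n => g n y := by
    apply Summable.of_norm
    refine Summable.of_nonneg_of_le (fun n => norm_nonneg _) (fun n => ?_)
      ((summable_master α (lam * y^α) hα0 hα1 (by positivity)))
    rw [hg_def]
    simp only
    rw [Real.norm_eq_abs, abs_div, abs_of_pos (hGpos n), abs_pow, abs_mul, abs_neg,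
      abs_of_pos hlam, abs_of_nonneg (Real.rpow_nonneg hy.le α)]
    rw [div_le_div_iff_of_pos_right (hGpos n)]
    exact le_mul_of_one_le_left (by positivity) (by
      have := Nat.cast_nonneg (α := ℝ) n; linarith)
  exact hasDerivAt_tsum_of_isPreconnected hu hopen hconn hderiv hbound hyin hg0 hyin

theorem stmt12 (α lam : ℝ) (hα0 : 0 < α) (hα1 : α < 1) (hlam : 0 < lam)
    (Q : ℝ → ℝ)
    (hQ : ∀ t, Q t = ∑' n : ℕ, (-lam * t ^ α) ^ n / Real.Gamma (α * n + 1)) :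
    Q 0 = 1 ∧
    ∀ t > 0,
      (1 / Real.Gamma (1 - α)) *
          ∫ t' in (0:ℝ)..t, (t - t') ^ (-α) * deriv Q t' = -lam * Q t := by
  constructor
  · rw [hQ 0, tsum_eq_single 0 ?_]
    · norm_num [Real.Gamma_one]
    · intro n hn
      rw [Real.zero_rpow hα0.ne', mul_zero, zero_pow hn, zero_div]
  · intro t ht
    have hG1α : 0 < Real.Gamma (1-α) := Real.Gamma_pos_of_pos (by linarith)
    have hGpos : ∀ x : ℝ, 0 ≤ x → 0 < Real.Gamma (x+1) :=
      fun x hx => Real.Gamma_pos_of_pos (by linarith)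
    set F : ℕ → ℝ → ℝ :=
      fun n x => (t-x) ^ (-α) * ((-lam) ^ n * (α * n * x ^ (α * n - 1)) / Real.Gamma (α * n + 1))
      with hF_def
    -- each F (n+1) equals a constant times a beta-type integrand
    have hc : ∀ n : ℕ, ∀ x : ℝ, F (n+1) x
        = ((-lam) ^ (n+1) * (α*((n:ℝ)+1)) / Real.Gamma (α*((n:ℝ)+1)+1))
          * (x ^ (α*((n:ℝ)+1)-1) * (t-x) ^ (-α)) := by
      intro n x
      rw [hF_def]
      push_cast
      ring
    have hF0 : F 0 = fun _ => (0:ℝ) := by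
      funext x
      rw [hF_def]
      push_cast
      ring
    -- Step 1 : rewrite the integral
    have hstep1 : (∫ t' in (0:ℝ)..t, (t - t') ^ (-α) * deriv Q t')
        = ∫ x in Ioc (0:ℝ) t, ∑' n : ℕ, F n x := by
      rw [intervalIntegral.integral_of_le ht.le]
      apply setIntegral_congr_fun measurableSet_Ioc
      intro x hx
      show (t - x) ^ (-α) * deriv Q x = ∑' n : ℕ, F n x
      rw [(QderivAux α lam hα0 hα1 hlam Q hQ x hx.1).deriv]
      exact (tsum_mul_left).symm
    -- integrability
    have hFint : ∀ n : ℕ, Integrable (F n) (volume.restrict (Ioc 0 t)) := by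
      intro n
      cases n with
      | zero => rw [hF0]; exact integrable_zero _ _ _
      | succ n =>
        have hii := (betaTypeIntegrable (α*((n:ℝ)+1)-1) (-α) t
          (by nlinarith [mul_nonneg hα0.le (Nat.cast_nonneg (α := ℝ) n)])
          (by linarith) ht).const_mul
          ((-lam) ^ (n+1) * (α*((n:ℝ)+1)) / Real.Gamma (α*((n:ℝ)+1)+1))
        rw [intervalIntegrable_iff_integrableOn_Ioc_of_le ht.le] at hii
        exact hii.congr_fun (fun x _ => (hc n x).symm) measurableSet_Ioc
    -- value of ∫ F (n+1)
    have hbv : ∀ n : ℕ, (∫ x in (0:ℝ)..t, x ^ (α*((n:ℝ)+1)-1) * (t-x) ^ (-α))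
        = t ^ (α*n) * (Real.Gamma (α*((n:ℝ)+1)) * Real.Gamma (1-α) / Real.Gamma (α*n+1)) := by
      intro n
      have h := betaTypeValue (α*((n:ℝ)+1)) (1-α) t (by positivity) (by linarith) ht
      rw [show (1-α)-1 = -α by ring, show α*((n:ℝ)+1)+(1-α)-1 = α*n by ring,
        show α*((n:ℝ)+1)+(1-α) = α*n+1 by ring] at h
      exact h
    have hFval : ∀ n : ℕ, (∫ x in Ioc (0:ℝ) t, F (n+1) x)
        = -lam * (Real.Gamma (1-α) * ((-lam) ^ n * t ^ (α*n) / Real.Gamma (α*n+1))) := by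
      intro n
      rw [← intervalIntegral.integral_of_le ht.le,
        intervalIntegral.integral_congr (fun x _ => hc n x),
        intervalIntegral.integral_const_mul, hbv n]
      have hp : (0:ℝ) < α*((n:ℝ)+1) := by positivity
      rw [Real.Gamma_add_one hp.ne']
      have hGn : Real.Gamma (α*((n:ℝ)+1)) ≠ 0 := (Real.Gamma_pos_of_pos hp).ne'
      have hGm : Real.Gamma (α*(n:ℝ)+1) ≠ 0 :=
        (hGpos _ (by positivity)).ne'
      field_simp
      ring
    -- norm values
    have hFnormval : ∀ n : ℕ, (∫ x in Ioc (0:ℝ) t, ‖F (n+1) x‖)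
        = lam * (Real.Gamma (1-α) * (lam ^ n * t ^ (α*n) / Real.Gamma (α*n+1))) := by
      intro n
      have heq : EqOn (fun x => ‖F (n+1) x‖)
          (fun x => (lam ^ (n+1) * (α*((n:ℝ)+1)) / Real.Gamma (α*((n:ℝ)+1)+1))
            * (x ^ (α*((n:ℝ)+1)-1) * (t-x) ^ (-α))) (Ioc 0 t) := by
        intro x hx
        simp only
        have hp : (0:ℝ) < α*((n:ℝ)+1) := by positivity
        have hGp : (0:ℝ) < Real.Gamma (α*((n:ℝ)+1)+1) :=
          Real.Gamma_pos_of_pos (by positivity)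
        rw [hc n x, norm_mul, Real.norm_eq_abs, Real.norm_eq_abs,
          abs_div, abs_mul, abs_pow, abs_neg, abs_of_pos hlam, abs_of_pos hp,
          abs_of_pos hGp,
          abs_of_nonneg (mul_nonneg (Real.rpow_nonneg hx.1.le _)
            (Real.rpow_nonneg (by linarith [hx.2] : (0:ℝ) ≤ t - x) _))]
      rw [setIntegral_congr_fun measurableSet_Ioc heq,
        ← intervalIntegral.integral_of_le ht.le,
        intervalIntegral.integral_const_mul, hbv n]
      have hp : (0:ℝ) < α*((n:ℝ)+1) := by positivity
      rw [Real.Gamma_add_one hp.ne']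
      have hGn : Real.Gamma (α*((n:ℝ)+1)) ≠ 0 := (Real.Gamma_pos_of_pos hp).ne'
      have hGm : Real.Gamma (α*(n:ℝ)+1) ≠ 0 := (hGpos _ (by positivity)).ne'
      field_simp
      ring
    -- summability of norm integrals
    have hFsum : Summable fun n => ∫ x in Ioc (0:ℝ) t, ‖F n x‖ := by
      rw [← summable_nat_add_iff 1]
      have hE : ∀ n : ℕ, (lam * t^α) ^ n = lam ^ n * t ^ (α*n) := by
        intro n
        rw [mul_pow, ← Real.rpow_natCast (t^α) n, ← Real.rpow_mul ht.le]
      refine Summable.of_nonneg_of_le (fun n => ?_) (fun n => ?_)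
        ((summable_master α (lam * t^α) hα0 hα1 (by positivity)).mul_left
          (lam * Real.Gamma (1-α)))
      · rw [hFnormval n]
        positivity
      rw [hFnormval n, hE n]
      have h1 : lam ^ n * t ^ (α*(n:ℝ)) / Real.Gamma (α*(n:ℝ)+1)
          ≤ ((n:ℝ)+1) * (lam ^ n * t ^ (α*(n:ℝ))) / Real.Gamma (α*(n:ℝ)+1) := by
        rw [div_le_div_iff_of_pos_right (hGpos _ (by positivity))]
        exact le_mul_of_one_le_left (by positivity)
          (by linarith [Nat.cast_nonneg (α := ℝ) n])
      calc lam * (Real.Gamma (1-α) * (lam ^ n * t ^ (α*(n:ℝ)) / Real.Gamma (α*n+1)))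
          = (lam * Real.Gamma (1-α)) * (lam ^ n * t ^ (α*(n:ℝ)) / Real.Gamma (α*n+1)) := by ring
        _ ≤ (lam * Real.Gamma (1-α)) * (((n:ℝ)+1) * (lam ^ n * t ^ (α*(n:ℝ))) / Real.Gamma (α*n+1)) := by
            apply mul_le_mul_of_nonneg_left h1 (by positivity)
    -- exchange
    have hhs := MeasureTheory.hasSum_integral_of_summable_integral_norm
      (μ := volume.restrict (Ioc (0:ℝ) t)) hFint hFsum
    have hsumm : Summable fun n => ∫ x in Ioc (0:ℝ) t, F n x := ⟨_, hhs⟩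
    have hexch : (∫ x in Ioc (0:ℝ) t, ∑' n : ℕ, F n x)
        = ∑' n : ℕ, ∫ x in Ioc (0:ℝ) t, F n x := hhs.tsum_eq.symm
    have hQt : Q t = ∑' n : ℕ, (-lam) ^ n * t ^ (α*(n:ℝ)) / Real.Gamma (α*n+1) := by
      rw [hQ t]
      apply tsum_congr
      intro n
      rw [mul_pow, ← Real.rpow_natCast (t^α) n, ← Real.rpow_mul ht.le]
    rw [hstep1, hexch, hsumm.tsum_eq_zero_add]
    rw [show (∫ x in Ioc (0:ℝ) t, F 0 x) = 0 by rw [hF0]; simp]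
    rw [zero_add, tsum_congr hFval, tsum_mul_left, tsum_mul_left, hQt]
    field_simp
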